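/- Let $p \in \mathbb{R}$ and suppose $F: \mathbb{S} \to \mathbb{C}$ is holomorphic on the strip $\mathbb{S} = \{z : -1/2 < \mathrm{Re}(z) < 1/2\}$, extends continuously to the closure, satisfies $F(z + ih) = e^{ph} F(z)$ for all $z \in \mathbb{S}$ and $h \in \mathbb{R}$, satisfies the Riemann boundary conditions $F(-1/2 + iy) \in e^{-i\pi/4}\mathbb{R}$ and $F(1/2 + iy) \in e^{i\pi/4}\mathbb{R}$ for all $y \in \mathbb{R}$, and is not identically zero. Then $p \in \pi\mathbb{Z} + \pi/2$ and there exists $c \in \mathbb{R}$ with $F(x+iy) = c\, C_{p/\pi} e^{-ipx + py}$ where $C_k = e^{i\pi(-k/2-1/4)}$. -/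

import Mathlib

open Complex Real Filter Topology

/-- The open vertical strip `{z : -1/2 < Re z < 1/2}`. -/
def strip : Set ℂ := {z : ℂ | -(1:ℝ)/2 < z.re ∧ z.re < 1/2}

/-- Normalization constant `Cₖ = e^{iπ(-k/2-1/4)}`. -/
noncomputable def Cnorm (k : ℝ) : ℂ :=
  Complex.exp ((Real.pi : ℂ) * Complex.I * (-(k : ℂ)/2 - 1/4))

lemma strip_open : IsOpen strip := by
  have : strip = Complex.re ⁻¹' Set.Ioo (-(1:ℝ)/2) (1/2) := rfl
  rw [this]; exact isOpen_Ioo.preimage Complex.continuous_re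

lemma strip_convex : Convex ℝ strip := by
  have : strip = {z : ℂ | -(1:ℝ)/2 < z.re} ∩ {z : ℂ | z.re < 1/2} := rfl
  rw [this]; exact (convex_halfSpace_re_gt _).inter (convex_halfSpace_re_lt _)

/-- Key formula on the strip: an eigenfunction is a multiple of `exp(-ipz)`. -/
lemma strip_formula (p : ℝ) (F : ℂ → ℂ)
    (hdiff : DifferentiableOn ℂ F strip)
    (heig : ∀ z ∈ strip, ∀ h : ℝ, F (z + Complex.I * (h : ℂ)) = Real.exp (p * h) * F z) :
    ∀ z ∈ strip, F z = F 0 * Complex.exp (-Complex.I * p * z) := by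
  have hder : ∀ z ∈ strip, HasDerivAt F (-Complex.I * p * F z) z := by
    intro z hz
    have hopen := strip_open
    have hd : DifferentiableAt ℂ F z := hdiff.differentiableAt (hopen.mem_nhds hz)
    have hF : HasDerivAt F (deriv F z) z := hd.hasDerivAt
    have hin : HasDerivAt (fun w : ℂ => z + Complex.I * w) (Complex.I) 0 := by
      simpa using ((hasDerivAt_id (0:ℂ)).const_mul Complex.I).const_add z
    have hF0 : HasDerivAt F (deriv F z) (z + Complex.I * 0) := by
      rw [mul_zero, add_zero]; exact hF
    have hcomp : HasDerivAt (fun w : ℂ => F (z + Complex.I * w)) (deriv F z * Complex.I) 0 := by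
      have := HasDerivAt.comp (0:ℂ) hF0 hin
      simpa [Function.comp_def] using this
    have h1 : HasDerivAt (fun h : ℝ => F (z + Complex.I * (h:ℂ))) (deriv F z * Complex.I) 0 := by
      simpa using hcomp.comp_ofReal
    have h2 : HasDerivAt (fun h : ℝ => (Real.exp (p * h) : ℂ) * F z) ((p : ℂ) * F z) 0 := by
      have hre : HasDerivAt (fun h : ℝ => Real.exp (p * h)) p 0 := by
        have := (Real.hasDerivAt_exp (p * 0)).comp 0 ((hasDerivAt_id (0:ℝ)).const_mul p)
        simpa [Function.comp_def] using this
      have := (hre.ofReal_comp).mul_const (F z)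
      simpa using this
    have heq : (fun h : ℝ => F (z + Complex.I * (h:ℂ)))
        = fun h : ℝ => (Real.exp (p * h) : ℂ) * F z := by
      funext h; exact heig z hz h
    rw [heq] at h1
    have hdz : deriv F z * Complex.I = (p : ℂ) * F z := h1.unique h2
    have : deriv F z = -Complex.I * p * F z := by
      linear_combination (-Complex.I) * hdz + (deriv F z) * Complex.I_sq
    rwa [this] at hF
  set G : ℂ → ℂ := fun z => F z * Complex.exp (Complex.I * p * z) with hG
  have hGder : ∀ z ∈ strip, HasDerivAt G 0 z := by
    intro z hz
    have hexp : HasDerivAt (fun z : ℂ => Complex.exp (Complex.I * p * z))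
        (Complex.I * p * Complex.exp (Complex.I * p * z)) z := by
      have := ((hasDerivAt_id z).const_mul (Complex.I * p)).cexp
      simpa [mul_comm] using this
    have hmul := (hder z hz).mul hexp
    have hzero : -Complex.I * ↑p * F z * Complex.exp (Complex.I * ↑p * z) +
        F z * (Complex.I * ↑p * Complex.exp (Complex.I * ↑p * z)) = 0 := by ring
    rw [hzero] at hmul
    exact hmul
  have h0 : (0:ℂ) ∈ strip := by constructor <;> norm_num [strip]
  have hconst : ∀ z ∈ strip, G z = G 0 := by
    intro z hz
    have hGd : DifferentiableOn ℂ G strip := fun x hx =>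
      ((hGder x hx).differentiableAt).differentiableWithinAt
    refine strip_convex.is_const_of_fderivWithin_eq_zero hGd (fun x hx => ?_) hz h0
    have : fderiv ℂ G x = 0 := by
      have h := (hGder x hx).hasFDerivAt.fderiv
      rw [h]; ext1; simp
    rw [fderivWithin_of_isOpen strip_open hx]
    exact this
  intro z hz
  have hzz := hconst z hz
  have hG0 : G 0 = F 0 := by simp [hG]
  have hkey : F z * Complex.exp (Complex.I * p * z) = F 0 := by rw [← hG0]; exact hzz
  have hE : Complex.exp (Complex.I * p * z) * Complex.exp (-Complex.I * p * z) = 1 := by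
    rw [← Complex.exp_add, show Complex.I * (p:ℂ) * z + -Complex.I * p * z = 0 by ring,
      Complex.exp_zero]
  calc F z = F z * (Complex.exp (Complex.I * p * z) * Complex.exp (-Complex.I * p * z)) := by
        rw [hE, mul_one]
    _ = (F z * Complex.exp (Complex.I * p * z)) * Complex.exp (-Complex.I * p * z) := by ring
    _ = F 0 * Complex.exp (-Complex.I * p * z) := by rw [hkey]

lemma tendsto_aux : Tendsto (fun n : ℕ => (1:ℝ)/(n+2)) atTop (𝓝 0) := by
  have h := (tendsto_one_div_add_atTop_nhds_zero_nat : Tendsto (fun n : ℕ => (1:ℝ)/((n:ℝ)+1)) atTop (𝓝 0)).comp (tendsto_add_atTop_nat 1)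
  convert h using 2 with n
  simp [Function.comp]
  ring

lemma boundary_formula (p : ℝ) (F : ℂ → ℂ)
    (hcont : ContinuousOn F (closure strip))
    (hform : ∀ z ∈ strip, F z = F 0 * Complex.exp (-Complex.I * p * z))
    (x : ℝ) (hx : x = 1/2 ∨ x = -(1:ℝ)/2) :
    F x = F 0 * Complex.exp (-Complex.I * p * x) := by
  set xn : ℕ → ℝ := fun n => x * (1 - 1/(n+2)) with hxn
  have hmem : ∀ n, ((xn n : ℝ) : ℂ) ∈ strip := by
    intro n
    have h1 : (0:ℝ) < (n:ℝ)+2 := by positivity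
    have hε : (0:ℝ) < 1/((n:ℝ)+2) := by positivity
    have hε2 : 1/((n:ℝ)+2) ≤ 1/2 := by
      rw [div_le_div_iff₀ h1 (by norm_num)]
      have := Nat.cast_nonneg (α := ℝ) n
      linarith
    constructor <;> · simp only [Complex.ofReal_re, hxn]
                      rcases hx with h | h <;> subst h <;> nlinarith
  have hw : Tendsto (fun n => ((xn n : ℝ) : ℂ)) atTop (𝓝 (x : ℂ)) := by
    have hr : Tendsto xn atTop (𝓝 x) := by
      have := (tendsto_const_nhds (x := (1:ℝ)) (f := atTop)).sub tendsto_aux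
      have := this.const_mul x
      simpa [hxn, one_div] using this
    exact (Complex.continuous_ofReal.continuousAt.tendsto).comp hr
  have hxcl : ((x:ℝ):ℂ) ∈ closure strip :=
    mem_closure_of_tendsto hw (Filter.Eventually.of_forall fun n => hmem n)
  have hF1 : Tendsto (fun n => F ((xn n : ℝ) : ℂ)) atTop (𝓝 (F x)) := by
    refine (hcont _ hxcl).tendsto.comp ?_
    rw [tendsto_nhdsWithin_iff]
    exact ⟨hw, Filter.Eventually.of_forall fun n => subset_closure (hmem n)⟩
  have hF2 : Tendsto (fun n => F ((xn n : ℝ) : ℂ)) atTop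
      (𝓝 (F 0 * Complex.exp (-Complex.I * p * x))) := by
    have hg : Continuous fun z : ℂ => F 0 * Complex.exp (-Complex.I * p * z) := by
      fun_prop
    have := (hg.tendsto _).comp hw
    refine this.congr fun n => ?_
    exact (hform _ (hmem n)).symm
  exact tendsto_nhds_unique hF1 hF2

/-- Classification of vertical translation eigenfunctions with Riemann boundary
values in the strip: a nonzero holomorphic `F` on the strip, continuous up to the
boundary, with `F(z+ih) = e^{ph}F(z)`, with `F(-1/2+iy) ∈ e^{-iπ/4}ℝ` and
`F(1/2+iy) ∈ e^{iπ/4}ℝ`, forces `p ∈ πℤ + π/2` and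
`F(x+iy) = c C_{p/π} e^{-ipx+py}` for a real constant `c`. -/
theorem strip_translation_eigenfunctions (p : ℝ) (F : ℂ → ℂ)
    (hdiff : DifferentiableOn ℂ F strip)
    (hcont : ContinuousOn F (closure strip))
    (heig : ∀ z ∈ strip, ∀ h : ℝ, F (z + Complex.I * (h : ℂ)) = Real.exp (p * h) * F z)
    (hbL : ∀ y : ℝ, ∃ r : ℝ,
      F (-(1:ℂ)/2 + Complex.I * (y : ℂ)) = Complex.exp (-(Real.pi : ℂ) * Complex.I / 4) * (r : ℂ))
    (hbR : ∀ y : ℝ, ∃ r : ℝ,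
      F ((1:ℂ)/2 + Complex.I * (y : ℂ)) = Complex.exp ((Real.pi : ℂ) * Complex.I / 4) * (r : ℂ))
    (hne : ∃ z ∈ strip, F z ≠ 0) :
    (∃ n : ℤ, p = Real.pi * n + Real.pi / 2) ∧
    ∃ c : ℝ, ∀ x y : ℝ, -(1:ℝ)/2 < x → x < 1/2 →
      F ((x : ℂ) + Complex.I * (y : ℂ))
        = (c : ℂ) * Cnorm (p / Real.pi) *
            Complex.exp (-Complex.I * (p : ℂ) * (x : ℂ) + (p : ℂ) * (y : ℂ)) := by
  have hform := strip_formula p F hdiff heig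
  set a : ℂ := F 0 with ha
  -- a ≠ 0
  have ha0 : a ≠ 0 := by
    obtain ⟨z, hz, hFz⟩ := hne
    rw [hform z hz] at hFz
    intro h; rw [h, zero_mul] at hFz; exact hFz rfl
  -- boundary values
  obtain ⟨r₁, hr₁⟩ := hbL 0
  obtain ⟨r₂, hr₂⟩ := hbR 0
  have hptL : (-(1:ℂ)/2 + Complex.I * ((0:ℝ):ℂ)) = ((-1/2 : ℝ) : ℂ) := by push_cast; ring
  have hptR : ((1:ℂ)/2 + Complex.I * ((0:ℝ):ℂ)) = ((1/2 : ℝ) : ℂ) := by push_cast; ring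
  have hbfL := boundary_formula p F hcont hform (-1/2) (Or.inr (by norm_num))
  have hbfR := boundary_formula p F hcont hform (1/2) (Or.inl rfl)
  rw [hptL, hbfL] at hr₁
  rw [hptR, hbfR] at hr₂
  rw [show -Complex.I * (p:ℂ) * (((-1/2 : ℝ)) : ℂ) = Complex.I * p / 2 by push_cast; ring] at hr₁
  rw [show -Complex.I * (p:ℂ) * (((1/2 : ℝ)) : ℂ) = -(Complex.I * p / 2) by push_cast; ring] at hr₂
  -- hr₁ : a * exp(I p/2) = exp(-πI/4) * r₁
  -- hr₂ : a * exp(-(I p/2)) = exp(πI/4) * r₂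
  have hA : a = (r₁ : ℂ) * Complex.exp (-(Complex.I * p / 2) - (Real.pi : ℂ) * Complex.I / 4) := by
    have h1 : a * (Complex.exp (Complex.I * p / 2) * Complex.exp (-(Complex.I * p / 2))) = a := by
      rw [← Complex.exp_add, show Complex.I * (p:ℂ) / 2 + -(Complex.I * p / 2) = 0 by ring,
        Complex.exp_zero, mul_one]
    calc a = (a * Complex.exp (Complex.I * p / 2)) * Complex.exp (-(Complex.I * p / 2)) := by
          rw [mul_assoc, h1]
      _ = (Complex.exp (-(Real.pi : ℂ) * Complex.I / 4) * r₁) * Complex.exp (-(Complex.I * p / 2)) := by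
          rw [hr₁]
      _ = (r₁ : ℂ) * (Complex.exp (-(Real.pi : ℂ) * Complex.I / 4) * Complex.exp (-(Complex.I * p / 2))) := by
          ring
      _ = (r₁ : ℂ) * Complex.exp (-(Complex.I * p / 2) - (Real.pi : ℂ) * Complex.I / 4) := by
          rw [← Complex.exp_add]; ring_nf
  -- r₁ ≠ 0
  have hr₁0 : r₁ ≠ 0 := by
    intro h; rw [h] at hA; simp at hA; exact ha0 hA
  -- quantization
  have hkey : (r₁ : ℂ) * Complex.exp (((-p - Real.pi/2 : ℝ) : ℂ) * Complex.I) = (r₂ : ℂ) := by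
    have h2 : a * Complex.exp (-(Complex.I * p / 2)) * Complex.exp (-(Real.pi : ℂ) * Complex.I / 4)
        = (r₂ : ℂ) := by
      rw [hr₂, mul_comm (Complex.exp ((Real.pi:ℂ) * Complex.I / 4)) (r₂:ℂ), mul_assoc,
        ← Complex.exp_add, show (Real.pi:ℂ) * Complex.I / 4 + -(Real.pi:ℂ) * Complex.I / 4 = 0 by ring,
        Complex.exp_zero, mul_one]
    rw [hA] at h2
    rw [← h2, mul_assoc, mul_assoc, ← Complex.exp_add, ← Complex.exp_add]
    congr 2
    push_cast
    ring
  have hsin : Real.sin (-p - Real.pi/2) = 0 := by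
    have him := congrArg Complex.im hkey
    simp only [Complex.mul_im, Complex.ofReal_re, Complex.ofReal_im,
      Complex.exp_ofReal_mul_I_im, Complex.exp_ofReal_mul_I_re, zero_mul, add_zero] at him
    rcases mul_eq_zero.mp him with h | h
    · exact absurd h hr₁0
    · exact h
  obtain ⟨m, hm⟩ := Real.sin_eq_zero_iff.mp hsin
  have hquant : ∃ n : ℤ, p = Real.pi * n + Real.pi / 2 := by
    refine ⟨-m - 1, ?_⟩
    push_cast
    linarith
  refine ⟨hquant, r₁, fun x y hx1 hx2 => ?_⟩
  have hmem : ((x:ℂ) + Complex.I * (y:ℂ)) ∈ strip := by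
    constructor <;> simp <;> linarith
  rw [hform _ hmem, hA]
  have hC : Cnorm (p / Real.pi) = Complex.exp (-(Complex.I * p / 2) - (Real.pi : ℂ) * Complex.I / 4) := by
    unfold Cnorm
    congr 1
    have hπ : (Real.pi : ℂ) ≠ 0 := Complex.ofReal_ne_zero.mpr Real.pi_ne_zero
    push_cast
    field_simp
  rw [hC]
  congr 1
  congr 1
  linear_combination (-(p:ℂ) * (y:ℂ)) * Complex.I_sq
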